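/- Let 0 < r₁ ≤ r₂, and let γ > 0 satisfy 10γ < r₂ + r₁. Let δ > 0 and α, β ≥ 0. Suppose C ⊆ ℝ² is a 100δ-separated set with #C = δ^{−α}, and for each c ∈ C the circles c + r₁S¹ and c + r₂S¹ each contain sets C₁(c), C₂(c) of δ^{−β} many 100δ-separated points, such that at least half of the pairs (x,y) ∈ C₁(c) × C₂(c) satisfy r₂ − r₁ + 10γ < |x−y| < r₂ + r₁ − 10γ. Then the union ⋃_{c∈C} (C₁(c) ∪ C₂(c)) contains at least c₀ · δ^{−α/2 − β} many δ-separated points, where c₀ > 0 depends only on r₁, r₂, γ. -/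

import Mathlib

open Metric Set

abbrev E2 := EuclideanSpace ℝ (Fin 2)

lemma e2_dist_sq (u v : E2) : (dist u v)^2 = (u 0 - v 0)^2 + (u 1 - v 1)^2 := by
  rw [dist_eq_norm, EuclideanSpace.norm_eq, Real.sq_sqrt (by positivity)]
  simp [Fin.sum_univ_two]

lemma e2_coord_le_dist (u v : E2) (i : Fin 2) : |u i - v i| ≤ dist u v := by
  have h := e2_dist_sq u v
  have h2 : (u i - v i)^2 ≤ (dist u v)^2 := by
    have : i = 0 ∨ i = 1 := by omega
    rcases this with rfl | rfl <;>
      nlinarith [sq_nonneg (u 0 - v 0), sq_nonneg (u 1 - v 1)]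
  calc |u i - v i| = Real.sqrt ((u i - v i)^2) := (Real.sqrt_sq_eq_abs _).symm
    _ ≤ Real.sqrt ((dist u v)^2) := Real.sqrt_le_sqrt h2
    _ = dist u v := Real.sqrt_sq dist_nonneg

/-- Packing lemma. -/
lemma packing (ρ R : ℝ) (hρ : 0 < ρ) (T : Finset E2)
    (hsep : ∀ x ∈ T, ∀ y ∈ T, x ≠ y → ρ ≤ dist x y)
    (hdiam : ∀ x ∈ T, ∀ y ∈ T, dist x y ≤ R) :
    (T.card : ℝ) ≤ (4*R/ρ + 2)^2 := by
  rcases T.eq_empty_or_nonempty with h | ⟨p₀, hp₀⟩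
  · simp [h]; positivity
  have hR : 0 ≤ R := le_trans (by simp) (hdiam p₀ hp₀ p₀ hp₀)
  set s : ℝ := ρ/2 with hs
  have hs0 : 0 < s := by positivity
  set N : ℤ := ⌊R/s⌋ with hN
  have hN0 : 0 ≤ N := Int.floor_nonneg.2 (by positivity)
  set I : Finset (ℤ × ℤ) := Finset.Icc (-(N+1)) N ×ˢ Finset.Icc (-(N+1)) N with hI
  have key : ∀ c ∈ T, ∀ i : Fin 2, ⌊(c i - p₀ i)/s⌋ ∈ Finset.Icc (-(N+1)) N := by
    intro c hc i
    have habs : |c i - p₀ i| ≤ R := (e2_coord_le_dist c p₀ i).trans (hdiam c hc p₀ hp₀)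
    rw [abs_le] at habs
    refine Finset.mem_Icc.2 ⟨Int.le_floor.2 ?_, Int.floor_le_floor (by gcongr; exact habs.2)⟩
    have h1 : R/s < (N:ℝ) + 1 := Int.lt_floor_add_one _
    have h2 : -(R/s) ≤ (c i - p₀ i)/s := by
      rw [← neg_div]; gcongr; exact habs.1
    push_cast
    linarith
  have hinj : Set.InjOn (fun c : E2 => (⌊(c 0 - p₀ 0)/s⌋, ⌊(c 1 - p₀ 1)/s⌋)) T := by
    intro c hc c' hc' heq
    by_contra hne
    have hd := hsep c hc c' hc' hne
    have hco : ∀ i : Fin 2, |c i - c' i| < s := by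
      intro i
      have heqi : ⌊(c i - p₀ i)/s⌋ = ⌊(c' i - p₀ i)/s⌋ := by
        have : i = 0 ∨ i = 1 := by omega
        rcases this with rfl | rfl
        · exact congrArg Prod.fst heq
        · exact congrArg Prod.snd heq
      have l1 : (⌊(c i - p₀ i)/s⌋ : ℝ) ≤ (c i - p₀ i)/s := Int.floor_le _
      have l2 : (c i - p₀ i)/s < (⌊(c i - p₀ i)/s⌋ : ℝ) + 1 := Int.lt_floor_add_one _
      have l3 : (⌊(c' i - p₀ i)/s⌋ : ℝ) ≤ (c' i - p₀ i)/s := Int.floor_le _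
      have l4 : (c' i - p₀ i)/s < (⌊(c' i - p₀ i)/s⌋ : ℝ) + 1 := Int.lt_floor_add_one _
      rw [heqi] at l1 l2
      have : |(c i - p₀ i)/s - (c' i - p₀ i)/s| < 1 := by
        rw [abs_lt]; constructor <;> linarith
      rw [div_sub_div_same, abs_div, abs_of_pos hs0, div_lt_one hs0] at this
      have e : c i - c' i = c i - p₀ i - (c' i - p₀ i) := by ring
      rw [e]; exact this
    have hd2 := e2_dist_sq c c'
    have h0 := hco 0; have h1 := hco 1
    rw [abs_lt] at h0 h1
    nlinarith [dist_nonneg (x := c) (y := c')]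
  have hcard : T.card ≤ I.card := Finset.card_le_card_of_injOn _ (fun c hc => Finset.mem_product.2 ⟨key c hc 0, key c hc 1⟩) hinj
  have hIcard : (I.card : ℝ) = ((2*N+2 : ℤ) : ℝ)^2 := by
    rw [hI, Finset.card_product, Int.card_Icc]
    have : (N + 1 - -(N+1)) = 2*N+2 := by ring
    rw [this]
    have h3 : ((2*N+2).toNat : ℤ) = 2*N+2 := Int.toNat_of_nonneg (by omega)
    have h4 : ((2*N+2).toNat : ℝ) = 2*(N:ℝ)+2 := by exact_mod_cast congrArg (fun z : ℤ => (z : ℝ)) h3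
    push_cast
    rw [h4]
    push_cast
    ring
  have hNle : (N : ℝ) ≤ R/s := Int.floor_le _
  have hb : ((2*N+2 : ℤ) : ℝ) ≤ 4*R/ρ + 2 := by
    push_cast
    have h1 : R/s = 2*R/ρ := by rw [hs]; field_simp
    rw [h1] at hNle
    have h2 : 4*R/ρ = 2*(2*R/ρ) := by ring
    rw [h2]
    linarith
  calc (T.card : ℝ) ≤ (I.card : ℝ) := by exact_mod_cast hcard
    _ = ((2*N+2 : ℤ) : ℝ)^2 := hIcard
    _ ≤ (4*R/ρ + 2)^2 := by
        apply pow_le_pow_left₀ ?_ hb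
        push_cast; positivity

lemma le_of_sq_le_sq' {a b : ℝ} (ha : 0 ≤ a) (hb : 0 ≤ b) (h : a^2 ≤ b^2) : a ≤ b := by
  nlinarith [sq_nonneg (a-b), sq_nonneg (a+b)]

set_option maxHeartbeats 2000000 in
lemma annulus_bound (r₁ r₂ γ : ℝ) (h1 : 0 < r₁) (h12 : r₁ ≤ r₂) (hγ : 0 < γ)
    (hγ2 : 10 * γ < r₂ + r₁) :
    ∃ K : ℝ, 0 < K ∧ ∀ δ : ℝ, 0 < δ → ∀ a b : E2, ∀ T : Finset E2,
      (∀ x ∈ T, ∀ y ∈ T, x ≠ y → 100 * δ ≤ dist x y) →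
      (∀ c ∈ T, |dist c a - r₁| ≤ δ ∧ |dist c b - r₂| ≤ δ) →
      r₂ - r₁ + 10 * γ - 2 * δ ≤ dist a b → dist a b ≤ r₂ + r₁ - 10 * γ + 2 * δ →
      (T.card : ℝ) ≤ K := by
  obtain ⟨R, hRdef⟩ : ∃ R : ℝ, R = r₁ + r₂ := ⟨_, rfl⟩
  have hR0 : 0 < R := by rw [hRdef]; linarith
  obtain ⟨A, hAdef⟩ : ∃ A : ℝ, A = R / γ := ⟨_, rfl⟩
  have hAγ : A * γ = R := by rw [hAdef]; field_simp
  have hA10 : 10 < A := by rw [hAdef, lt_div_iff₀ hγ]; linarith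
  obtain ⟨D, hDdef⟩ : ∃ D : ℝ, D = A^2 := ⟨_, rfl⟩
  have hAD : A ≤ D := by nlinarith only [hA10, hDdef]
  have hD0 : 0 < D := by nlinarith only [hA10, hDdef]
  refine ⟨3 * (10*D + 10)^2, by positivity, ?_⟩
  intro δ hδ a b T hsep hann hdlo hdhi
  by_cases hcase : γ / 100 < δ
  · -- large δ: trivial diameter bound
    have hdiam : ∀ x ∈ T, ∀ y ∈ T, dist x y ≤ 2*R + 2*δ := by
      intro x hx y hy
      have h1x := (abs_le.1 (hann x hx).1).2
      have h1y := (abs_le.1 (hann y hy).1).2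
      calc dist x y ≤ dist x a + dist y a := dist_triangle_right _ _ _
        _ ≤ 2*R + 2*δ := by linarith only [h1x, h1y, h12, h1, hRdef]
    have hP := packing (100*δ) (2*R+2*δ) (by positivity) T hsep hdiam
    refine hP.trans ?_
    have hb : 4*(2*R+2*δ)/(100*δ) + 2 ≤ 10*D + 10 := by
      have h2 : 4*(2*R+2*δ)/(100*δ) ≤ 10*D + 8 := by
        rw [div_le_iff₀ (by positivity : (0:ℝ) < 100*δ)]
        have t1 : A*γ ≤ D*γ := mul_le_mul_of_nonneg_right hAD hγ.le
        have t2 : D*γ < D*(100*δ) := mul_lt_mul_of_pos_left (by linarith only [hcase]) hD0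
        nlinarith only [t1, t2, hAγ, hδ, hD0]
      linarith
    have hb0 : (0:ℝ) ≤ 4*(2*R+2*δ)/(100*δ) + 2 := by positivity
    linarith only [pow_le_pow_left₀ hb0 hb 2, sq_nonneg (10*D+10)]
  · push_neg at hcase
    rcases T.eq_empty_or_nonempty with rfl | hTne
    · simp; positivity
    obtain ⟨d, hddef⟩ : ∃ d : ℝ, d = dist a b := ⟨_, rfl⟩
    rw [← hddef] at hdlo hdhi
    have hd9 : 9*γ ≤ d := by linarith
    have hdR : d ≤ R := by linarith
    have hd0 : 0 < d := by linarith
    obtain ⟨e0, he0⟩ : ∃ x : ℝ, x = (b 0 - a 0)/d := ⟨_, rfl⟩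
    obtain ⟨e1, he1⟩ : ∃ x : ℝ, x = (b 1 - a 1)/d := ⟨_, rfl⟩
    have hb0 : b 0 = a 0 + d * e0 := by rw [he0]; field_simp; ring
    have hb1 : b 1 = a 1 + d * e1 := by rw [he1]; field_simp; ring
    have hdsq : d^2 = (b 0 - a 0)^2 + (b 1 - a 1)^2 := by
      rw [hddef, dist_comm]; exact e2_dist_sq b a
    have he : e0^2 + e1^2 = 1 := by
      have h2 : d^2 * (e0^2 + e1^2) = d^2 * 1 := by
        rw [hb0, hb1] at hdsq; linear_combination -hdsq
      exact mul_left_cancel₀ (by positivity) h2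
    obtain ⟨X, hXdef⟩ : ∃ X : E2 → ℝ, ∀ c, X c = (c 0 - a 0)*e0 + (c 1 - a 1)*e1 :=
      ⟨_, fun _ => rfl⟩
    obtain ⟨Y, hYdef⟩ : ∃ Y : E2 → ℝ, ∀ c, Y c = (c 1 - a 1)*e0 - (c 0 - a 0)*e1 :=
      ⟨_, fun _ => rfl⟩
    have fact1 : ∀ c : E2, (dist c a)^2 = X c^2 + Y c^2 := by
      intro c
      rw [e2_dist_sq]; simp only [hXdef, hYdef]
      linear_combination (-(c 0 - a 0)^2 - (c 1 - a 1)^2) * he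
    have fact2 : ∀ c : E2, (dist c b)^2 = (X c - d)^2 + Y c^2 := by
      intro c
      rw [e2_dist_sq, hb0, hb1]; simp only [hXdef, hYdef]
      linear_combination (d^2 - ((c 0 - a 0)^2 + (c 1 - a 1)^2)) * he
    have fact3 : ∀ c c' : E2, (dist c c')^2 = (X c - X c')^2 + (Y c - Y c')^2 := by
      intro c c'
      rw [e2_dist_sq]; simp only [hXdef, hYdef]
      linear_combination (-(c 0 - c' 0)^2 - (c 1 - c' 1)^2) * he
    have hpoint : ∀ c ∈ T, 2*d*(X c) = (dist c a)^2 - (dist c b)^2 + d^2 ∧ 8*γ^2 ≤ (Y c)^2 := by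
      intro c hc
      obtain ⟨hu, hv⟩ := hann c hc
      rw [abs_le] at hu hv
      have hu0 : (0:ℝ) ≤ dist c a := dist_nonneg
      have hv0 : (0:ℝ) ≤ dist c b := dist_nonneg
      have h2dX : 2*d*(X c) = (dist c a)^2 - (dist c b)^2 + d^2 := by
        linear_combination fact2 c - fact1 c
      refine ⟨h2dX, ?_⟩
      have hY2 : (Y c)^2 = (dist c a)^2 - (X c)^2 := by linear_combination -fact1 c
      have key : 4*d^2*(Y c)^2 =
          ((dist c a + dist c b - d)*(dist c b + d - dist c a)) *
          ((d + dist c a - dist c b)*(d + dist c a + dist c b)) := by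
        linear_combination (4*d^2)*hY2 - (2*d*(X c) + (dist c a)^2 - (dist c b)^2 + d^2)*h2dX
      have p1 : 9*γ ≤ dist c a + dist c b - d := by linarith
      have p2 : d - 2*δ ≤ dist c b + d - dist c a := by linarith
      have p3 : 9*γ ≤ d + dist c a - dist c b := by linarith
      have p4 : d ≤ d + dist c a + dist c b := by linarith
      have hdd : 0 < d - 2*δ := by linarith
      have q1 : (9*γ)*(d-2*δ) ≤ (dist c a + dist c b - d)*(dist c b + d - dist c a) :=
        mul_le_mul p1 p2 hdd.le (by linarith)
      have q2 : (9*γ)*d ≤ (d + dist c a - dist c b)*(d + dist c a + dist c b) :=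
        mul_le_mul p3 p4 hd0.le (by linarith)
      have q : (9*γ)*(d-2*δ)*((9*γ)*d) ≤
          ((dist c a + dist c b - d)*(dist c b + d - dist c a)) *
          ((d + dist c a - dist c b)*(d + dist c a + dist c b)) :=
        mul_le_mul q1 q2 (mul_nonneg (by linarith) hd0.le)
          (mul_nonneg (by linarith) (by linarith))
      have h49 : 162*δ ≤ 49*d := by linarith
      have q3 : 32*γ^2*d^2 ≤ (9*γ)*(d-2*δ)*((9*γ)*d) := by
        have hint : (0:ℝ) ≤ γ^2*d*(49*d-162*δ) :=
          mul_nonneg (mul_nonneg (sq_nonneg γ) hd0.le) (by linarith)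
        linarith only [hint]
      have e : 4*d^2*(8*γ^2) = 32*γ^2*d^2 := by ring
      have q4 : 4*d^2*(8*γ^2) ≤ 4*d^2*(Y c)^2 := by linarith only [q3, q, key, e]
      exact le_of_mul_le_mul_left (by linarith only [q4]) (by positivity : (0:ℝ) < 4*d^2)
    classical
    have hpair : ∀ c ∈ T, ∀ c' ∈ T, 0 ≤ Y c * Y c' → dist c c' ≤ 2*D*δ := by
      intro c hc c' hc' hsign
      obtain ⟨h2dX, hY8⟩ := hpoint c hc
      obtain ⟨h2dX', hY8'⟩ := hpoint c' hc'
      obtain ⟨hu, hv⟩ := hann c hc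
      obtain ⟨hu', hv'⟩ := hann c' hc'
      rw [abs_le] at hu hv hu' hv'
      have hu0 : (0:ℝ) ≤ dist c a := dist_nonneg
      have hv0 : (0:ℝ) ≤ dist c b := dist_nonneg
      have hu0' : (0:ℝ) ≤ dist c' a := dist_nonneg
      have hv0' : (0:ℝ) ≤ dist c' b := dist_nonneg
      -- bounds on differences of squared distances
      have m1 : (dist c a)^2 - (dist c' a)^2 ≤ 4*δ*(r₁+δ) := by
        nlinarith only [hu.1, hu.2, hu'.1, hu'.2, hu0, hu0', hδ, h1]
      have m1' : (dist c' a)^2 - (dist c a)^2 ≤ 4*δ*(r₁+δ) := by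
        nlinarith only [hu.1, hu.2, hu'.1, hu'.2, hu0, hu0', hδ, h1]
      have m2 : (dist c b)^2 - (dist c' b)^2 ≤ 4*δ*(r₂+δ) := by
        nlinarith only [hv.1, hv.2, hv'.1, hv'.2, hv0, hv0', hδ, h1, h12]
      have m2' : (dist c' b)^2 - (dist c b)^2 ≤ 4*δ*(r₂+δ) := by
        nlinarith only [hv.1, hv.2, hv'.1, hv'.2, hv0, hv0', hδ, h1, h12]
      -- X difference bound
      have h2dd : 2*d*(X c - X c') =
          ((dist c a)^2 - (dist c' a)^2) - ((dist c b)^2 - (dist c' b)^2) := by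
        linear_combination h2dX - h2dX'
      have tt : 18*R*δ ≤ 2*d*(A*δ) := by
        have h' : 0 ≤ A*δ*(d - 9*γ) :=
          mul_nonneg (mul_nonneg (by linarith only [hA10]) hδ.le) (by linarith only [hd9])
        have h2 : A*γ*δ = R*δ := by rw [← hAγ]
        nlinarith only [h', h2]
      have hdup : 2*d*(X c - X c') ≤ 2*d*(A*δ) := by
        have : 4*δ*(r₁+δ) + 4*δ*(r₂+δ) ≤ 18*R*δ := by
          nlinarith only [hδ, hcase, hγ, hRdef, h1, h12, hγ2]
        linarith only [h2dd, m1, m2', this, tt]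
      have hdlo' : -(2*d*(A*δ)) ≤ 2*d*(X c - X c') := by
        have : 4*δ*(r₁+δ) + 4*δ*(r₂+δ) ≤ 18*R*δ := by
          nlinarith only [hδ, hcase, hγ, hRdef, h1, h12, hγ2]
        linarith only [h2dd, m1', m2, this, tt]
      have hXup : X c - X c' ≤ A*δ :=
        le_of_mul_le_mul_left (by linarith only [hdup]) (by linarith only [hd0] : (0:ℝ) < 2*d)
      have hXlo : -(A*δ) ≤ X c - X c' := by
        have := le_of_mul_le_mul_left (a := 2*d) (by linarith only [hdlo'] : 2*d*(-(A*δ)) ≤ 2*d*(X c - X c'))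
          (by linarith only [hd0] : (0:ℝ) < 2*d)
        linarith only [this]
      have hXabs : |X c - X c'| ≤ A*δ := abs_le.2 ⟨hXlo, hXup⟩
      -- |X| bounds
      have haX : (X c)^2 ≤ (dist c a)^2 := by nlinarith only [fact1 c, sq_nonneg (Y c)]
      have haX' : (X c')^2 ≤ (dist c' a)^2 := by nlinarith only [fact1 c', sq_nonneg (Y c')]
      have hXc : |X c| ≤ R := by
        rw [abs_le]
        constructor <;> nlinarith only [haX, hu.1, hu.2, hu0, hδ, hcase, hγ, hRdef, h1, h12, hγ2]
      have hXc' : |X c'| ≤ R := by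
        rw [abs_le]
        constructor <;> nlinarith only [haX', hu'.1, hu'.2, hu0', hδ, hcase, hγ, hRdef, h1, h12, hγ2]
      have hXS : |X c + X c'| ≤ 2*R := by
        calc |X c + X c'| ≤ |X c| + |X c'| := abs_add_le _ _
          _ ≤ 2*R := by linarith only [hXc, hXc']
      -- Y² difference bound
      have hYeq : (Y c)^2 - (Y c')^2 =
          ((dist c a)^2 - (dist c' a)^2) - (X c - X c')*(X c + X c') := by
        linear_combination -(fact1 c) + fact1 c'
      have hXprod : |(X c - X c')*(X c + X c')| ≤ (A*δ)*(2*R) := by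
        rw [abs_mul]
        exact mul_le_mul hXabs hXS (abs_nonneg _) (by positivity)
      have hUabs : |(dist c a)^2 - (dist c' a)^2| ≤ 4*δ*(r₁+δ) := abs_le.2 ⟨by linarith only [m1'], m1⟩
      have hYabs : |(Y c)^2 - (Y c')^2| ≤ 3*A*R*δ := by
        rw [hYeq]
        calc |((dist c a)^2 - (dist c' a)^2) - (X c - X c')*(X c + X c')|
            ≤ |(dist c a)^2 - (dist c' a)^2| + |(X c - X c')*(X c + X c')| := abs_sub _ _
          _ ≤ 4*δ*(r₁+δ) + (A*δ)*(2*R) := add_le_add hUabs hXprod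
          _ ≤ 3*A*R*δ := by
              have i1 : r₁ + δ ≤ R := by linarith only [hRdef, hγ2, h12, hcase, hγ]
              have i2 : 4*δ*(r₁+δ) ≤ 4*δ*R := by
                have := mul_le_mul_of_nonneg_left i1 (by positivity : (0:ℝ) ≤ 4*δ)
                linarith only [this]
              have i3 : 0 ≤ (A-4)*R*δ :=
                mul_nonneg (mul_nonneg (by linarith only [hA10]) hR0.le) hδ.le
              nlinarith only [i2, i3]
      have hsq1 : (Y c - Y c')^2 * (Y c + Y c')^2 = ((Y c)^2 - (Y c')^2)^2 := by ring
      have h16 : 16*γ^2 ≤ (Y c + Y c')^2 := by nlinarith only [hY8, hY8', hsign]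
      have hYsq2 : ((Y c)^2 - (Y c')^2)^2 ≤ (3*A*R*δ)^2 := by
        nlinarith only [hYabs, abs_nonneg ((Y c)^2 - (Y c')^2), sq_abs ((Y c)^2 - (Y c')^2)]
      have e2 : 16*γ^2*((D*δ)^2) = 16*(A^2)*(R^2)*δ^2 := by
        rw [hDdef]
        linear_combination (16*A^2*δ^2*(A*γ+R)) * hAγ
      have hfin : 16*γ^2*((Y c - Y c')^2) ≤ 16*γ^2*((D*δ)^2) := by
        have s1 : 16*γ^2*((Y c - Y c')^2) ≤ (Y c + Y c')^2 * (Y c - Y c')^2 :=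
          mul_le_mul_of_nonneg_right h16 (sq_nonneg _)
        have s2 : (3*A*R*δ)^2 ≤ 16*(A^2)*(R^2)*δ^2 := by nlinarith only [sq_nonneg (A*R*δ)]
        nlinarith only [s1, s2, hsq1, hYsq2, e2]
      have hYsq : (Y c - Y c')^2 ≤ (D*δ)^2 :=
        le_of_mul_le_mul_left hfin (by positivity : (0:ℝ) < 16*γ^2)
      have hXsq : (X c - X c')^2 ≤ (A*δ)^2 := by
        nlinarith only [hXup, hXlo]
      have hdsq' : (dist c c')^2 ≤ (2*D*δ)^2 := by
        have hint : 0 ≤ (D-A)*(D+A)*δ^2 :=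
          mul_nonneg (mul_nonneg (by linarith only [hAD]) (by linarith only [hAD, hA10])) (sq_nonneg δ)
        nlinarith only [fact3 c c', hXsq, hYsq, hint]
      exact le_of_sq_le_sq' dist_nonneg (by positivity) hdsq'
    -- split by sign of Y and pack
    have hsplit := Finset.card_filter_add_card_filter_not (s := T) (p := fun c => 0 ≤ Y c)
    have hpack1 : ((T.filter (fun c => 0 ≤ Y c)).card : ℝ) ≤ (4*(2*D*δ)/(100*δ) + 2)^2 := by
      apply packing (100*δ) (2*D*δ) (by positivity)
      · intro x hx y hy hxy
        exact hsep x (Finset.mem_filter.1 hx).1 y (Finset.mem_filter.1 hy).1 hxy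
      · intro x hx y hy
        exact hpair x (Finset.mem_filter.1 hx).1 y (Finset.mem_filter.1 hy).1
          (mul_nonneg (Finset.mem_filter.1 hx).2 (Finset.mem_filter.1 hy).2)
    have hpack2 : ((T.filter (fun c => ¬ 0 ≤ Y c)).card : ℝ) ≤ (4*(2*D*δ)/(100*δ) + 2)^2 := by
      apply packing (100*δ) (2*D*δ) (by positivity)
      · intro x hx y hy hxy
        exact hsep x (Finset.mem_filter.1 hx).1 y (Finset.mem_filter.1 hy).1 hxy
      · intro x hx y hy
        refine hpair x (Finset.mem_filter.1 hx).1 y (Finset.mem_filter.1 hy).1 ?_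
        have h1' := lt_of_not_ge (Finset.mem_filter.1 hx).2
        have h2' := lt_of_not_ge (Finset.mem_filter.1 hy).2
        exact (mul_pos_of_neg_of_neg h1' h2').le
    have e3 : 4*(2*D*δ)/(100*δ) = 2*D/25 := by
      rw [div_eq_div_iff (by positivity) (by norm_num : (25:ℝ) ≠ 0)]
      ring
    have e4 : (4*(2*D*δ)/(100*δ) + 2)^2 ≤ (10*D+10)^2 := by
      apply pow_le_pow_left₀ (by positivity)
      rw [e3]
      linarith only [hD0]
    have : (T.card : ℝ) = ((T.filter (fun c => 0 ≤ Y c)).card : ℝ)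
        + ((T.filter (fun c => ¬ 0 ≤ Y c)).card : ℝ) := by
      exact_mod_cast hsplit.symm
    rw [this]
    nlinarith only [hpack1, hpack2, e4, sq_nonneg (10*D+10)]

open scoped Classical in
set_option maxHeartbeats 2000000 in
/-- Counting lemma (KY): let `0 < r₁ ≤ r₂`, `0 < γ` with `10γ < r₂ + r₁`. There is a constant
`c₀ > 0` (depending only on `r₁, r₂, γ`) such that: for any `δ > 0`, `α, β ≥ 0`, any
`100δ`-separated set `C` with `#C = δ^{-α}`, and for each `c ∈ C` sets `C₁ c ⊆ c + r₁S¹`,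
`C₂ c ⊆ c + r₂S¹` of `δ^{-β}` many `100δ`-separated points such that at least half of the
pairs `(x,y) ∈ C₁ c × C₂ c` satisfy `r₂ − r₁ + 10γ < |x−y| < r₂ + r₁ − 10γ`, the union
`⋃_{c ∈ C} (C₁ c ∪ C₂ c)` contains at least `c₀ δ^{-α/2-β}` many `δ`-separated points. -/
theorem counting_lemma (r₁ r₂ γ : ℝ) (h1 : 0 < r₁) (h12 : r₁ ≤ r₂) (hγ : 0 < γ)
    (hγ2 : 10 * γ < r₂ + r₁) :
    ∃ c₀ > (0:ℝ), ∀ (δ α β : ℝ), 0 < δ → 0 ≤ α → 0 ≤ β →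
      ∀ (C : Finset E2) (C₁ C₂ : E2 → Finset E2),
        (∀ x ∈ C, ∀ y ∈ C, x ≠ y → 100 * δ ≤ dist x y) →
        (C.card : ℝ) = δ ^ (-α) →
        (∀ c ∈ C,
          (∀ p ∈ C₁ c, dist p c = r₁) ∧ (∀ p ∈ C₂ c, dist p c = r₂) ∧
          (∀ x ∈ C₁ c, ∀ y ∈ C₁ c, x ≠ y → 100 * δ ≤ dist x y) ∧
          (∀ x ∈ C₂ c, ∀ y ∈ C₂ c, x ≠ y → 100 * δ ≤ dist x y) ∧
          ((C₁ c).card : ℝ) = δ ^ (-β) ∧ ((C₂ c).card : ℝ) = δ ^ (-β) ∧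
          (((C₁ c).card * (C₂ c).card : ℝ) ≤ 2 *
            (((C₁ c) ×ˢ (C₂ c)).filter (fun p =>
              r₂ - r₁ + 10 * γ < dist p.1 p.2 ∧ dist p.1 p.2 < r₂ + r₁ - 10 * γ)).card)) →
        ∃ S : Finset E2, S ⊆ C.biUnion (fun c => C₁ c ∪ C₂ c) ∧
          (∀ x ∈ S, ∀ y ∈ S, x ≠ y → δ ≤ dist x y) ∧
          c₀ * δ ^ (-(α / 2) - β) ≤ (S.card : ℝ) := by
  obtain ⟨K, hK0, hKb⟩ := annulus_bound r₁ r₂ γ h1 h12 hγ hγ2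
  refine ⟨1 / Real.sqrt (2*K), by positivity, ?_⟩
  intro δ α β hδ hα hβ C C₁ C₂ hCsep hCcard hC
  set U : Finset E2 := C.biUnion (fun c => C₁ c ∪ C₂ c) with hUdef
  -- maximal δ-separated subset of U
  have hPne : (U.powerset.filter (fun s => ∀ x ∈ s, ∀ y ∈ s, x ≠ y → δ ≤ dist x y)).Nonempty :=
    ⟨∅, by simp⟩
  obtain ⟨S, hSmem, hSmax⟩ := Finset.exists_max_image _ Finset.card hPne
  rw [Finset.mem_filter, Finset.mem_powerset] at hSmem
  obtain ⟨hSsub, hSsep⟩ := hSmem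
  refine ⟨S, hSsub, hSsep, ?_⟩
  have hcover : ∀ u ∈ U, ∃ s ∈ S, dist u s < δ := by
    intro u hu
    by_cases hus : u ∈ S
    · exact ⟨u, hus, by simpa using hδ⟩
    by_contra hno
    push_neg at hno
    have hins : insert u S ∈ U.powerset.filter
        (fun s => ∀ x ∈ s, ∀ y ∈ s, x ≠ y → δ ≤ dist x y) := by
      rw [Finset.mem_filter, Finset.mem_powerset]
      refine ⟨Finset.insert_subset hu hSsub, ?_⟩
      intro x hx y hy hxy
      rcases Finset.mem_insert.1 hx with rfl | hx'
      · rcases Finset.mem_insert.1 hy with rfl | hy'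
        · exact absurd rfl hxy
        · exact hno y hy'
      · rcases Finset.mem_insert.1 hy with rfl | hy'
        · rw [dist_comm]; exact hno x hx'
        · exact hSsep x hx' y hy' hxy
    have hle := hSmax _ hins
    rw [Finset.card_insert_of_notMem hus] at hle
    omega
  -- choice function
  choose gf hg1 hg2 using hcover
  set g : E2 → E2 := fun u => if h : u ∈ U then gf u h else u with hgdef
  have hgS : ∀ u ∈ U, g u ∈ S := by intro u hu; simp only [hgdef, dif_pos hu]; exact hg1 u hu
  have hgd : ∀ u ∈ U, dist u (g u) < δ := by
    intro u hu; simp only [hgdef, dif_pos hu]; exact hg2 u hu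
  -- the triple set
  set good : E2 → Finset (E2 × E2) := fun c => ((C₁ c) ×ˢ (C₂ c)).filter (fun p =>
      r₂ - r₁ + 10 * γ < dist p.1 p.2 ∧ dist p.1 p.2 < r₂ + r₁ - 10 * γ) with hgood
  set B : Finset ((_ : E2) × E2 × E2) := C.sigma good with hBdef
  have hmemB : ∀ z : (_ : E2) × E2 × E2, z ∈ B ↔ z.1 ∈ C ∧ z.2.1 ∈ C₁ z.1 ∧ z.2.2 ∈ C₂ z.1 ∧
      r₂ - r₁ + 10 * γ < dist z.2.1 z.2.2 ∧ dist z.2.1 z.2.2 < r₂ + r₁ - 10 * γ := by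
    intro z
    rw [hBdef, Finset.mem_sigma, hgood, Finset.mem_filter, Finset.mem_product]
    tauto
  have hxU : ∀ c ∈ C, ∀ x ∈ C₁ c, x ∈ U :=
    fun c hc x hx => Finset.mem_biUnion.2 ⟨c, hc, Finset.mem_union_left _ hx⟩
  have hyU : ∀ c ∈ C, ∀ y ∈ C₂ c, y ∈ U :=
    fun c hc y hy => Finset.mem_biUnion.2 ⟨c, hc, Finset.mem_union_right _ hy⟩
  -- lower bound on B.card
  have hBlow : δ ^ (-α) * (δ ^ (-β) * δ ^ (-β)) ≤ 2 * (B.card : ℝ) := by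
    have hcard : (B.card : ℝ) = ∑ c ∈ C, ((good c).card : ℝ) := by
      rw [hBdef, Finset.card_sigma]
      push_cast
      try rfl
    have hterm : ∀ c ∈ C, δ ^ (-β) * δ ^ (-β) ≤ 2 * ((good c).card : ℝ) := by
      intro c hc
      obtain ⟨_, _, _, _, hc1, hc2, hc7⟩ := hC c hc
      calc δ ^ (-β) * δ ^ (-β) = ((C₁ c).card * (C₂ c).card : ℝ) := by rw [hc1, hc2]
        _ ≤ 2 * ((good c).card : ℝ) := by exact_mod_cast hc7
    calc δ ^ (-α) * (δ ^ (-β) * δ ^ (-β)) = ∑ _c ∈ C, (δ ^ (-β) * δ ^ (-β)) := by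
          rw [Finset.sum_const, nsmul_eq_mul, ← hCcard]
          try ring
      _ ≤ ∑ c ∈ C, 2 * ((good c).card : ℝ) := Finset.sum_le_sum hterm
      _ = 2 * (B.card : ℝ) := by rw [hcard, Finset.mul_sum]
  -- fiber map
  set f : (_ : E2) × E2 × E2 → E2 × E2 := fun z => (g z.2.1, g z.2.2) with hfdef
  have himg : ∀ z ∈ B, f z ∈ S ×ˢ S := by
    intro z hz
    rw [hmemB] at hz
    exact Finset.mem_product.2 ⟨hgS _ (hxU _ hz.1 _ hz.2.1), hgS _ (hyU _ hz.1 _ hz.2.2.1)⟩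
  have hfiber : ∀ p ∈ S ×ˢ S, ((B.filter (fun z => f z = p)).card : ℝ) ≤ K := by
    intro p _
    set F := B.filter (fun z => f z = p) with hFdef
    rcases F.eq_empty_or_nonempty with hF | ⟨z₀, hz₀⟩
    · rw [hF]; simpa using hK0.le
    have hmemF : ∀ z ∈ F, z.1 ∈ C ∧ z.2.1 ∈ C₁ z.1 ∧ z.2.2 ∈ C₂ z.1 ∧
        (r₂ - r₁ + 10 * γ < dist z.2.1 z.2.2 ∧ dist z.2.1 z.2.2 < r₂ + r₁ - 10 * γ) ∧
        g z.2.1 = p.1 ∧ g z.2.2 = p.2 := by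
      intro z hz
      rw [hFdef, Finset.mem_filter, hmemB] at hz
      obtain ⟨⟨a1, a2, a3, a4, a5⟩, a6⟩ := hz
      exact ⟨a1, a2, a3, ⟨a4, a5⟩, congrArg Prod.fst a6, congrArg Prod.snd a6⟩
    -- injectivity of z ↦ z.1 on F
    have hinj : Set.InjOn (fun z : (_ : E2) × E2 × E2 => z.1) F := by
      intro z hz z' hz' heq
      obtain ⟨c1, x1, y1, ⟨d1, d1'⟩, g1, g1'⟩ := hmemF z (Finset.mem_coe.1 hz)
      obtain ⟨c2, x2, y2, ⟨d2, d2'⟩, g2, g2'⟩ := hmemF z' (Finset.mem_coe.1 hz')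
      simp only at heq
      obtain ⟨_, _, hs1, hs2, _, _, _⟩ := hC z.1 c1
      have hxx : z.2.1 = z'.2.1 := by
        by_contra hne
        have hsep100 := hs1 z.2.1 x1 z'.2.1 (heq ▸ x2) hne
        have dx1 : dist z.2.1 p.1 < δ := g1 ▸ hgd _ (hxU _ c1 _ x1)
        have dx2 : dist z'.2.1 p.1 < δ := g2 ▸ hgd _ (hxU _ c2 _ x2)
        have : dist z.2.1 z'.2.1 < 2 * δ :=
          (dist_triangle_right _ _ p.1).trans_lt (by linarith)
        linarith
      have hyy : z.2.2 = z'.2.2 := by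
        by_contra hne
        have hsep100 := hs2 z.2.2 y1 z'.2.2 (heq ▸ y2) hne
        have dy1 : dist z.2.2 p.2 < δ := g1' ▸ hgd _ (hyU _ c1 _ y1)
        have dy2 : dist z'.2.2 p.2 < δ := g2' ▸ hgd _ (hyU _ c2 _ y2)
        have : dist z.2.2 z'.2.2 < 2 * δ :=
          (dist_triangle_right _ _ p.2).trans_lt (by linarith)
        linarith
      obtain ⟨zc, zx, zy⟩ := z
      obtain ⟨zc', zx', zy'⟩ := z'
      simp only at heq hxx hyy
      simp [heq, Prod.ext_iff] at hxx hyy ⊢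
      exact ⟨hxx, hyy⟩
    -- the set of centers
    have hTcard : F.card = (F.image (fun z => z.1)).card :=
      (Finset.card_image_of_injOn hinj).symm
    rw [hTcard]
    -- apply annulus bound with a := p.1, b := p.2
    obtain ⟨c0m, x0m, y0m, ⟨dlo0, dhi0⟩, gx0, gy0⟩ := hmemF z₀ hz₀
    have dx0 : dist z₀.2.1 p.1 < δ := gx0 ▸ hgd _ (hxU _ c0m _ x0m)
    have dy0 : dist z₀.2.2 p.2 < δ := gy0 ▸ hgd _ (hyU _ c0m _ y0m)
    obtain ⟨hr1, hr2, _, _, _, _, _⟩ := hC z₀.1 c0m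
    have hx0r : dist z₀.2.1 z₀.1 = r₁ := hr1 _ x0m
    have hy0r : dist z₀.2.2 z₀.1 = r₂ := hr2 _ y0m
    apply hKb δ hδ p.1 p.2
    · intro x hx y hy hxy
      obtain ⟨zx, hzx, rfl⟩ := Finset.mem_image.1 hx
      obtain ⟨zy, hzy, rfl⟩ := Finset.mem_image.1 hy
      exact hCsep _ (hmemF zx hzx).1 _ (hmemF zy hzy).1 hxy
    · intro c hcT
      obtain ⟨z, hz, rfl⟩ := Finset.mem_image.1 hcT
      obtain ⟨hcC, hx, hy, _, hgx, hgy⟩ := hmemF z hz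
      obtain ⟨hr1', hr2', _, _, _, _, _⟩ := hC z.1 hcC
      have hxr : dist z.2.1 z.1 = r₁ := hr1' _ hx
      have hyr : dist z.2.2 z.1 = r₂ := hr2' _ hy
      have hdx : dist z.2.1 p.1 < δ := hgx ▸ hgd _ (hxU _ hcC _ hx)
      have hdy : dist z.2.2 p.2 < δ := hgy ▸ hgd _ (hyU _ hcC _ hy)
      constructor
      · have hup : dist z.1 p.1 ≤ r₁ + δ := by
          have h2 := dist_triangle z.1 z.2.1 p.1
          rw [dist_comm z.1 z.2.1, hxr] at h2
          linarith
        have hlo : r₁ - δ ≤ dist z.1 p.1 := by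
          have h3 := dist_triangle z.2.1 p.1 z.1
          rw [hxr, dist_comm p.1 z.1] at h3
          linarith
        rw [abs_le]; exact ⟨by linarith, by linarith⟩
      · have hup : dist z.1 p.2 ≤ r₂ + δ := by
          have h2 := dist_triangle z.1 z.2.2 p.2
          rw [dist_comm z.1 z.2.2, hyr] at h2
          linarith
        have hlo : r₂ - δ ≤ dist z.1 p.2 := by
          have h3 := dist_triangle z.2.2 p.2 z.1
          rw [hyr, dist_comm p.2 z.1] at h3
          linarith
        rw [abs_le]; exact ⟨by linarith, by linarith⟩
    · have t1 := dist_triangle4 z₀.2.1 p.1 p.2 z₀.2.2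
      rw [dist_comm p.2 z₀.2.2] at t1
      linarith
    · have t2 := dist_triangle4 p.1 z₀.2.1 z₀.2.2 p.2
      rw [dist_comm p.1 z₀.2.1] at t2
      linarith
  -- counting
  have hcount : (B.card : ℝ) ≤ (S.card : ℝ)^2 * K := by
    have h0 : B.card = ∑ p ∈ S ×ˢ S, (B.filter (fun z => f z = p)).card :=
      Finset.card_eq_sum_card_fiberwise himg
    calc (B.card : ℝ) = ∑ p ∈ S ×ˢ S, ((B.filter (fun z => f z = p)).card : ℝ) := by
          rw [h0]; push_cast; ring
      _ ≤ ∑ _p ∈ S ×ˢ S, K := Finset.sum_le_sum hfiber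
      _ = ((S ×ˢ S).card : ℝ) * K := by rw [Finset.sum_const, nsmul_eq_mul]
      _ = (S.card : ℝ)^2 * K := by rw [Finset.card_product]; push_cast; ring
  have hfinal : δ ^ (-α) * (δ ^ (-β) * δ ^ (-β)) ≤ 2*K*(S.card:ℝ)^2 := by
    linarith [hBlow, hcount]
  have hexp : δ ^ (-(α/2)-β) * δ ^ (-(α/2)-β) = δ ^ (-α) * (δ ^ (-β) * δ ^ (-β)) := by
    rw [← Real.rpow_add hδ, ← Real.rpow_add hδ, ← Real.rpow_add hδ]
    congr 1
    ring
  have hsq : (δ ^ (-(α/2)-β))^2 ≤ (Real.sqrt (2*K) * (S.card:ℝ))^2 := by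
    rw [mul_pow, Real.sq_sqrt (by positivity : (0:ℝ) ≤ 2*K), pow_two, hexp]
    nlinarith [hfinal]
  have hle : δ ^ (-(α/2)-β) ≤ Real.sqrt (2*K) * (S.card:ℝ) :=
    le_of_sq_le_sq' (Real.rpow_nonneg hδ.le _) (mul_nonneg (Real.sqrt_nonneg _) (Nat.cast_nonneg _)) hsq
  have hs0 : 0 < Real.sqrt (2*K) := Real.sqrt_pos.2 (by positivity)
  rw [div_mul_eq_mul_div, one_mul, div_le_iff₀ hs0]
  nlinarith [hle]
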